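/- Let U be a family of intervals over {1,…,n} and let U* be its canonical form. For every sub-multiset P* of U*, there exists a sub-multiset P of U with |P| = |P*| such that c_P(i) ≥ c_{P*}(i) for every point i ∈ {1,…,n}. -/

import Mathlib

/-- The coverage of a point `i` by a family `X` of intervals (pairs `(l, r)` identified
with `{l,…,r}`): the number of intervals in `X`, with multiplicity, containing `i`. -/
def coverage (X : Multiset (ℕ × ℕ)) (i : ℕ) : ℕ :=
  (X.filter fun p => p.1 ≤ i ∧ i ≤ p.2).card

/-- The canonical form `U*` of a family `U` of intervals: pair the `j`-th smallest left
endpoint with the `j`-th smallest right endpoint, for `j = 1,…,|U|`. -/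
def canonical (U : Multiset (ℕ × ℕ)) : Multiset (ℕ × ℕ) :=
  ((Multiset.sort (U.map Prod.fst) (· ≤ ·)).zip
    (Multiset.sort (U.map Prod.snd) (· ≤ ·)) : List (ℕ × ℕ))

lemma sort_cons_min (a : ℕ) (s : Multiset ℕ) (h : ∀ b ∈ s, a ≤ b) :
    Multiset.sort (a ::ₘ s) (· ≤ ·) = a :: Multiset.sort s (· ≤ ·) := by
  refine (fun hp h1 h2 => List.Perm.eq_of_pairwise' (r := (· ≤ ·)) h1 h2 hp) ?_ ?_ ?_
  · apply Multiset.coe_eq_coe.mp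
    rw [← Multiset.cons_coe, Multiset.sort_eq, Multiset.sort_eq]
  · exact Multiset.pairwise_sort _ _
  · refine List.pairwise_cons.mpr ⟨?_, Multiset.pairwise_sort _ _⟩
    intro b hb
    exact h b (by simpa using hb)

lemma canonical_cons_min (p : ℕ × ℕ) (W : Multiset (ℕ × ℕ))
    (h1 : ∀ q ∈ W, p.1 ≤ q.1) (h2 : ∀ q ∈ W, p.2 ≤ q.2) :
    canonical (p ::ₘ W) = p ::ₘ canonical W := by
  unfold canonical
  rw [Multiset.map_cons, Multiset.map_cons,
    sort_cons_min _ _ (by intro b hb; obtain ⟨q, hq, rfl⟩ := Multiset.mem_map.mp hb; exact h1 q hq),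
    sort_cons_min _ _ (by intro b hb; obtain ⟨q, hq, rfl⟩ := Multiset.mem_map.mp hb; exact h2 q hq)]
  simp [List.zip_cons_cons]

lemma exists_min_im {α : Type} (f : α → ℕ) (s : Multiset α) (h : s ≠ 0) :
    ∃ a ∈ s, ∀ b ∈ s, f a ≤ f b := by
  induction s using Multiset.induction with
  | empty => exact absurd rfl h
  | cons a t ih =>
    rcases eq_or_ne t 0 with rfl | ht
    · exact ⟨a, Multiset.mem_cons_self _ _, by simp⟩
    · obtain ⟨c, hc, hmin⟩ := ih ht
      rcases le_total (f a) (f c) with hle | hle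
      · exact ⟨a, Multiset.mem_cons_self _ _, by
          intro b hb
          rcases Multiset.mem_cons.mp hb with rfl | hb
          · exact le_rfl
          · exact hle.trans (hmin b hb)⟩
      · exact ⟨c, Multiset.mem_cons_of_mem hc, by
          intro b hb
          rcases Multiset.mem_cons.mp hb with rfl | hb
          · exact hle
          · exact hmin b hb⟩

lemma canonical_eq_self (n : ℕ) (U : Multiset (ℕ × ℕ))
    (hb : ∀ p ∈ U, p.1 ≤ n ∧ p.2 ≤ n)
    (hunc : ∀ p ∈ U, ∀ q ∈ U.erase p, ¬(p.1 < q.1 ∧ q.2 < p.2)) :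
    canonical U = U := by
  induction U using Multiset.strongInductionOn with
  | ih U IH =>
    rcases eq_or_ne U 0 with rfl | hU
    · simp [canonical]
    · obtain ⟨p, hp, hmin⟩ := exists_min_im (fun q => (n + 1) * q.1 + q.2) U hU
      set W := U.erase p with hW
      have eU : U = p ::ₘ W := (Multiset.cons_erase hp).symm
      have key : ∀ q ∈ W, p.1 ≤ q.1 ∧ p.2 ≤ q.2 := by
        intro q hq
        have hqU : q ∈ U := Multiset.mem_of_mem_erase hq
        have hm := hmin q hqU
        have hb1 := hb p hp
        have hb2 := hb q hqU
        have hnc := hunc p hp q hq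
        have hle1 : p.1 ≤ q.1 := by
          by_contra hcon
          have hq1 : q.1 + 1 ≤ p.1 := by omega
          have := Nat.mul_le_mul_left (n + 1) hq1
          rw [Nat.mul_succ] at this
          omega
        by_cases h11 : p.1 = q.1
        · rw [h11] at hm
          exact ⟨hle1, by omega⟩
        · have h1 : p.1 < q.1 := by omega
          exact ⟨hle1, by omega⟩
      have hcW : canonical W = W := by
        apply IH W (by rw [hW]; exact Multiset.erase_lt.mpr hp)
        · intro q hq; exact hb q (Multiset.mem_of_mem_erase hq)
        · intro q hq r hr
          have : W.erase q ≤ U.erase q := by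
            rw [hW, Multiset.erase_comm]
            exact Multiset.erase_le _ _
          exact hunc q (Multiset.mem_of_mem_erase hq) r (Multiset.mem_of_le this hr)
      rw [eU, canonical_cons_min p W (fun q hq => (key q hq).1) (fun q hq => (key q hq).2), hcW]

lemma coverage_cons (x : ℕ × ℕ) (s : Multiset (ℕ × ℕ)) (i : ℕ) :
    coverage (x ::ₘ s) i = (if x.1 ≤ i ∧ i ≤ x.2 then 1 else 0) + coverage s i := by
  simp only [coverage, Multiset.filter_cons]
  split_ifs <;> simp <;> omega

lemma le_cons_cases {α : Type} [DecidableEq α] {P : Multiset α} {a : α} {t : Multiset α}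
    (h : P ≤ a ::ₘ t) : P ≤ t ∨ ∃ P₀, P₀ ≤ t ∧ P = a ::ₘ P₀ := by
  by_cases ha : a ∈ P
  · right
    refine ⟨P.erase a, ?_, (Multiset.cons_erase ha).symm⟩
    have := Multiset.erase_le_erase a h
    rwa [Multiset.erase_cons_head] at this
  · left
    rw [Multiset.le_iff_count]
    intro b
    by_cases hb : b = a
    · subst hb; simp [Multiset.count_eq_zero_of_notMem ha]
    · have := Multiset.le_iff_count.mp h b
      rwa [Multiset.count_cons_of_ne hb] at this

lemma main_lemma (n : ℕ) : ∀ d : ℕ, ∀ U : Multiset (ℕ × ℕ),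
    (∀ p ∈ U, 1 ≤ p.1 ∧ p.1 ≤ p.2 ∧ p.2 ≤ n) →
    Multiset.card U * (n * n) + 1 ≤ d + (U.map fun p => p.1 * p.2).sum →
    ∀ Pstar ≤ canonical U, ∃ P : Multiset (ℕ × ℕ), P ≤ U ∧
      Multiset.card P = Multiset.card Pstar ∧ ∀ i : ℕ, coverage Pstar i ≤ coverage P i := by
  intro d
  induction d with
  | zero =>
    intro U hU hbound Pstar hP
    exfalso
    have : (U.map fun p => p.1 * p.2).sum ≤ Multiset.card U * (n * n) := by
      have := Multiset.sum_le_card_nsmul (U.map fun p => p.1 * p.2) (n * n) (by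
        intro x hx
        obtain ⟨q, hq, rfl⟩ := Multiset.mem_map.mp hx
        have := hU q hq
        exact Nat.mul_le_mul (by omega) (by omega))
      simpa using this
    omega
  | succ d IH =>
    intro U hU hbound Pstar hP
    by_cases hunc : ∀ p ∈ U, ∀ q ∈ U.erase p, ¬(p.1 < q.1 ∧ q.2 < p.2)
    · refine ⟨Pstar, ?_, rfl, fun i => le_rfl⟩
      rwa [canonical_eq_self n U (fun p hp => ⟨by have := hU p hp; omega, (hU p hp).2.2⟩) hunc] at hP
    · push_neg at hunc
      obtain ⟨p, hp, q, hq, h1, h2⟩ := hunc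
      have hqU : q ∈ U := Multiset.mem_of_mem_erase hq
      set V := (U.erase p).erase q with hV
      have eU : U = p ::ₘ q ::ₘ V := by
        rw [hV, Multiset.cons_erase hq, Multiset.cons_erase hp]
      set U' := (p.1, q.2) ::ₘ (q.1, p.2) ::ₘ V with hU'
      have hVU : V ≤ U := by
        rw [eU]
        exact (Multiset.le_cons_self V q).trans (Multiset.le_cons_self _ p)
      have hvp := hU p hp
      have hvq := hU q hqU
      have hvalid' : ∀ r ∈ U', 1 ≤ r.1 ∧ r.1 ≤ r.2 ∧ r.2 ≤ n := by
        intro r hr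
        rw [hU'] at hr
        rcases Multiset.mem_cons.mp hr with rfl | hr
        · dsimp only; omega
        · rcases Multiset.mem_cons.mp hr with rfl | hr
          · dsimp only; omega
          · exact hU r (Multiset.mem_of_le hVU hr)
      have hcanon : canonical U' = canonical U := by
        unfold canonical
        rw [eU, hU']
        have hfst : (Multiset.map Prod.fst ((p.1, q.2) ::ₘ (q.1, p.2) ::ₘ V)) =
            (Multiset.map Prod.fst (p ::ₘ q ::ₘ V)) := by
          simp
        have hsnd : (Multiset.map Prod.snd ((p.1, q.2) ::ₘ (q.1, p.2) ::ₘ V)) =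
            (Multiset.map Prod.snd (p ::ₘ q ::ₘ V)) := by
          simp only [Multiset.map_cons]
          exact Multiset.cons_swap _ _ _
        rw [hfst, hsnd]
      have hm : (U.map fun r => r.1 * r.2).sum < (U'.map fun r => r.1 * r.2).sum := by
        rw [eU, hU']
        simp only [Multiset.map_cons, Multiset.sum_cons]
        have : p.1 * p.2 + q.1 * q.2 < p.1 * q.2 + q.1 * p.2 := by nlinarith
        omega
      have hcard' : Multiset.card U' = Multiset.card U := by rw [eU, hU']; simp
      have hmle : (U'.map fun r => r.1 * r.2).sum ≤ Multiset.card U' * (n * n) := by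
        have := Multiset.sum_le_card_nsmul (U'.map fun r => r.1 * r.2) (n * n) (by
          intro x hx
          obtain ⟨r, hr, rfl⟩ := Multiset.mem_map.mp hx
          have := hvalid' r hr
          exact Nat.mul_le_mul (by omega) (by omega))
        simpa using this
      obtain ⟨P, hPU', hcardP, hcov⟩ := IH U' hvalid'
        (by rw [hcard']; omega) Pstar (hcanon ▸ hP)
      -- transfer P ≤ U' to P'' ≤ U
      have hh : ∃ P'' : Multiset (ℕ × ℕ), P'' ≤ U ∧ Multiset.card P'' = Multiset.card P ∧
          ∀ i : ℕ, coverage P i ≤ coverage P'' i := by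
        rw [hU'] at hPU'
        rcases le_cons_cases hPU' with hc | ⟨P₁, hP₁, rfl⟩
        · rcases le_cons_cases hc with hc2 | ⟨P₀, hP₀, rfl⟩
          · exact ⟨P, le_trans hc2 hVU, rfl, fun i => le_rfl⟩
          · -- P = B ::ₘ P₀
            refine ⟨p ::ₘ P₀, ?_, by simp, ?_⟩
            · rw [eU]
              exact Multiset.cons_le_cons _ (le_trans hP₀ (Multiset.le_cons_self _ _))
            · intro i
              rw [coverage_cons, coverage_cons]
              dsimp only
              split_ifs <;> omega
        · rcases le_cons_cases hP₁ with hc2 | ⟨P₀, hP₀, rfl⟩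
          · -- P = A ::ₘ P₁, P₁ ≤ V
            refine ⟨p ::ₘ P₁, ?_, by simp, ?_⟩
            · rw [eU]
              exact Multiset.cons_le_cons _ (le_trans hc2 (Multiset.le_cons_self _ _))
            · intro i
              rw [coverage_cons, coverage_cons]
              dsimp only
              split_ifs <;> omega
          · -- P = A ::ₘ B ::ₘ P₀
            refine ⟨p ::ₘ q ::ₘ P₀, ?_, by simp, ?_⟩
            · rw [eU]
              exact Multiset.cons_le_cons _ (Multiset.cons_le_cons _ hP₀)
            · intro i
              rw [coverage_cons, coverage_cons, coverage_cons, coverage_cons]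
              dsimp only
              split_ifs <;> omega
      obtain ⟨P'', h1'', h2'', h3''⟩ := hh
      exact ⟨P'', h1'', by omega, fun i => le_trans (hcov i) (h3'' i)⟩

/-- For every family `U` of intervals over `{1,…,n}` and every
sub-multiset `P*` of the canonical form `U*`, there is a sub-multiset `P` of `U` with
`|P| = |P*|` and `c_P(i) ≥ c_{P*}(i)` for every point `i ∈ {1,…,n}`. -/
theorem stmt_9 (n : ℕ) (U : Multiset (ℕ × ℕ))
    (hU : ∀ p ∈ U, 1 ≤ p.1 ∧ p.1 ≤ p.2 ∧ p.2 ≤ n)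
    (Pstar : Multiset (ℕ × ℕ)) (hPstar : Pstar ≤ canonical U) :
    ∃ P : Multiset (ℕ × ℕ), P ≤ U ∧ Multiset.card P = Multiset.card Pstar ∧
      ∀ i ∈ Finset.Icc 1 n, coverage Pstar i ≤ coverage P i := by
  obtain ⟨P, h1, h2, h3⟩ := main_lemma n (Multiset.card U * (n * n) + 1) U hU (by omega) Pstar hPstar
  exact ⟨P, h1, h2, fun i _ => h3 i⟩
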